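/- Let n ≥ 1 and let Ψ be a local symplectomorphism of ω₀ on ℝ^{2n} such that on a neighbourhood of 0: p₁∘Ψ = p₁ and q₁∘Ψ ∈ I₁ = ⟨q₁⟩ (i.e. Ψ preserves the hypersurface {q₁ = 0}). Then q₁∘Ψ = q₁ near 0, all the remaining components pᵢ∘Ψ, qᵢ∘Ψ (i = 2,…,n) are independent of the variables p₁ and q₁, and the map germ B := (p₂∘Ψ, q₂∘Ψ, …, pₙ∘Ψ, qₙ∘Ψ), viewed as a map germ at 0 on ℝ^{2n−2} with coordinates (p₂,q₂,…,pₙ,qₙ), is a local symplectomorphism of the standard symplectic form Σᵢ₌₂ⁿ dpᵢ∧dqᵢ on ℝ^{2n−2}. -/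

import Mathlib

open Filter Topology

noncomputable section

/-- `ℝ^{2n}` with coordinates `(p, q) = (p₁,…,pₙ,q₁,…,qₙ)`. -/
abbrev PQ (n : ℕ) : Type := (Fin n → ℝ) × (Fin n → ℝ)

/-- A smooth germ at `0`: a function which is `C^∞` on some neighbourhood of `0`. -/
def SmoothGerm {E F : Type*} [NormedAddCommGroup E] [NormedSpace ℝ E]
    [NormedAddCommGroup F] [NormedSpace ℝ F] (f : E → F) : Prop :=
  ∃ U ∈ 𝓝 (0 : E), ContDiffOn ℝ (⊤ : ℕ∞) f U

/-- The standard symplectic form `ω₀ = Σᵢ dpᵢ∧dqᵢ` on `ℝ^{2n}` as a constant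
alternating bilinear form. -/
def omega0 (n : ℕ) (u v : PQ n) : ℝ := ∑ i : Fin n, (u.1 i * v.2 i - u.2 i * v.1 i)

/-- A local symplectomorphism of `ω₀`: `Ψ(0) = 0`, smooth near `0`, invertible
derivative, and `DΨ(z)` preserves `ω₀` for all `z` near `0`. -/
def IsLocalSymp (n : ℕ) (Ψ : PQ n → PQ n) : Prop :=
  Ψ 0 = 0 ∧ SmoothGerm Ψ ∧ Function.Bijective ⇑(fderiv ℝ Ψ 0) ∧
    ∀ᶠ z in 𝓝 (0 : PQ n), ∀ u v : PQ n,
      omega0 n (fderiv ℝ Ψ z u) (fderiv ℝ Ψ z v) = omega0 n u v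

/-- The `j`-th generator (0-indexed) of the list `q₁,p₁,q₂,p₂,…,qₙ,pₙ`. -/
def genFun (n j : ℕ) (z : PQ n) : ℝ :=
  if h : j / 2 < n then (if j % 2 = 0 then z.2 ⟨j / 2, h⟩ else z.1 ⟨j / 2, h⟩) else 0

/-- Membership (as germs at `0`) in the ideal `I_k` generated by the first `k`
functions of the list `q₁,p₁,q₂,p₂,…,qₙ,pₙ`. -/
def InIdeal (n k : ℕ) (g : PQ n → ℝ) : Prop :=
  ∃ c : Fin k → (PQ n → ℝ), (∀ j, SmoothGerm (c j)) ∧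
    ∀ᶠ z in 𝓝 (0 : PQ n), g z = ∑ j : Fin k, c j z * genFun n j.1 z

/-! ### Auxiliary definitions and lemmas -/

/-- The unit vector in the `p₁` direction. -/
def eP (N : ℕ) : PQ (N + 1) := (Pi.single 0 1, 0)

/-- The unit vector in the `q₁` direction. -/
def eQ (N : ℕ) : PQ (N + 1) := (0, Pi.single 0 1)

lemma omega0_sub_left (N : ℕ) (u u' v : PQ N) :
    omega0 N (u - u') v = omega0 N u v - omega0 N u' v := by
  simp only [omega0, ← Finset.sum_sub_distrib]
  refine Finset.sum_congr rfl fun i _ => ?_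
  simp only [Prod.fst_sub, Prod.snd_sub, Pi.sub_apply]
  ring

lemma omega0_nondeg (N : ℕ) (u : PQ N) (h : ∀ v, omega0 N u v = 0) : u = 0 := by
  have h2 := h (-u.2, u.1)
  have h3 : ∑ i : Fin N, (u.1 i ^ 2 + u.2 i ^ 2) = 0 := by
    rw [← h2, omega0]
    refine Finset.sum_congr rfl fun i _ => ?_
    simp only [Pi.neg_apply]
    ring
  have h4 : ∀ i ∈ (Finset.univ : Finset (Fin N)), u.1 i ^ 2 + u.2 i ^ 2 = 0 := by
    rw [← Finset.sum_eq_zero_iff_of_nonneg]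
    · exact h3
    · intro i _; positivity
  have h5 : ∀ i : Fin N, u.1 i = 0 ∧ u.2 i = 0 := by
    intro i
    have := h4 i (Finset.mem_univ i)
    constructor <;> nlinarith [sq_nonneg (u.1 i), sq_nonneg (u.2 i)]
  refine Prod.ext ?_ ?_ <;> funext i
  · exact (h5 i).1
  · exact (h5 i).2

lemma omega0_eP (N : ℕ) (x : PQ (N + 1)) : omega0 (N + 1) (eP N) x = x.2 0 := by
  simp [omega0, eP, Pi.single_apply, ite_mul]

lemma omega0_eQ (N : ℕ) (x : PQ (N + 1)) : omega0 (N + 1) (eQ N) x = -(x.1 0) := by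
  simp [omega0, eQ, Pi.single_apply, ite_mul]

lemma symp_bijective {N : ℕ} (A : PQ N →L[ℝ] PQ N)
    (hA : ∀ u v, omega0 N (A u) (A v) = omega0 N u v) : Function.Bijective A := by
  have hinj : Function.Injective A := by
    intro u u' huu
    have hz : A (u - u') = 0 := by rw [map_sub, huu, sub_self]
    have := omega0_nondeg N (u - u') (fun v => by
      rw [← hA (u - u') v, hz]
      simp [omega0])
    exact sub_eq_zero.mp this
  refine ⟨hinj, ?_⟩
  exact LinearMap.surjective_of_injective (f := (A : PQ N →ₗ[ℝ] PQ N)) hinj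

lemma col_eQ {N : ℕ} (A : PQ (N + 1) →L[ℝ] PQ (N + 1))
    (hA : ∀ u v, omega0 (N + 1) (A u) (A v) = omega0 (N + 1) u v)
    (h1 : ∀ v, (A v).1 0 = v.1 0) : A (eQ N) = eQ N := by
  have hsurj := (symp_bijective A hA).2
  have key : ∀ w, omega0 (N + 1) (A (eQ N) - eQ N) w = 0 := by
    intro w
    obtain ⟨v, rfl⟩ := hsurj w
    rw [omega0_sub_left, hA, omega0_eQ, omega0_eQ, h1, sub_self]
  have := omega0_nondeg _ _ key
  rwa [sub_eq_zero] at this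

lemma col_eP {N : ℕ} (A : PQ (N + 1) →L[ℝ] PQ (N + 1))
    (hA : ∀ u v, omega0 (N + 1) (A u) (A v) = omega0 (N + 1) u v)
    (h2 : ∀ v, (A v).2 0 = v.2 0) : A (eP N) = eP N := by
  have hsurj := (symp_bijective A hA).2
  have key : ∀ w, omega0 (N + 1) (A (eP N) - eP N) w = 0 := by
    intro w
    obtain ⟨v, rfl⟩ := hsurj w
    rw [omega0_sub_left, hA, omega0_eP, omega0_eP, h2, sub_self]
  have := omega0_nondeg _ _ key
  rwa [sub_eq_zero] at this

lemma line_const {E F : Type*} [NormedAddCommGroup E] [NormedSpace ℝ E]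
    [NormedAddCommGroup F] [NormedSpace ℝ F] {f : E → F} {s : Set E}
    (ho : IsOpen s) (hc : Convex ℝ s) (hd : ∀ z ∈ s, DifferentiableAt ℝ f z)
    {e : E} {w : F} (hder : ∀ z ∈ s, fderiv ℝ f z e = w) {c : E} {T : ℝ}
    (hcs : c ∈ s) (hTs : c + T • e ∈ s) : f (c + T • e) = f c + T • w := by
  set γ : ℝ → E := fun t => c + t • e with hγ
  have hγd : ∀ t : ℝ, HasDerivAt γ e t := by
    intro t
    simpa [hγ] using ((hasDerivAt_id t).smul_const e).const_add c
  set u : Set ℝ := γ ⁻¹' s with hu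
  have hγc : Continuous γ := by
    exact continuous_const.add (continuous_id.smul continuous_const)
  have huo : IsOpen u := ho.preimage hγc
  have huc : Convex ℝ u := by
    intro x hx y hy a b ha hb hab
    have key : γ (a • x + b • y) = a • γ x + b • γ y := by
      simp only [hγ, smul_eq_mul]
      have : a • (c + x • e) + b • (c + y • e) = (a + b) • c + (a * x + b * y) • e := by
        module
      rw [this, hab, one_smul]
    have : γ (a • x + b • y) ∈ s := by
      rw [key]; exact hc hx hy ha hb hab
    exact this
  set φ : ℝ → F := fun t => f (γ t) - t • w with hφ
  have hderφ : ∀ t ∈ u, HasDerivAt φ 0 t := by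
    intro t ht
    have h1 : HasDerivAt (fun t => f (γ t)) (fderiv ℝ f (γ t) e) t :=
      (hd _ ht).hasFDerivAt.comp_hasDerivAt t (hγd t)
    have h2 : HasDerivAt (fun t : ℝ => t • w) w t := by
      simpa using (hasDerivAt_id t).smul_const w
    have h3 := h1.sub h2
    rw [hder _ ht] at h3
    simp only [sub_self] at h3; exact h3
  have hdiffOn : DifferentiableOn ℝ φ u := fun t ht =>
    ((hderφ t ht).differentiableAt).differentiableWithinAt
  have hfd0 : ∀ t ∈ u, fderivWithin ℝ φ u t = 0 := by
    intro t ht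
    rw [fderivWithin_of_isOpen huo ht]
    have := (hderφ t ht).hasFDerivAt.fderiv
    rw [this]
    ext
    simp
  have h0 : (0 : ℝ) ∈ u := by
    show γ 0 ∈ s
    simp only [hγ, zero_smul, add_zero]
    exact hcs
  have hT : T ∈ u := by
    show γ T ∈ s
    exact hTs
  have := huc.is_const_of_fderivWithin_eq_zero hdiffOn hfd0 hT h0
  simp only [hφ, hγ, zero_smul, add_zero, sub_zero] at this
  linear_combination (norm := module) this

/-- Inclusion `ℝⁿ → ℝⁿ⁺¹` prepending a zero. -/
def iota0 (n : ℕ) : (Fin n → ℝ) →L[ℝ] (Fin (n + 1) → ℝ) :=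
  ContinuousLinearMap.pi (fun j => Fin.cases 0 (fun i => ContinuousLinearMap.proj i) j)

lemma iota0_zero (n : ℕ) (w : Fin n → ℝ) : iota0 n w 0 = 0 := by
  simp [iota0]

lemma iota0_succ (n : ℕ) (w : Fin n → ℝ) (i : Fin n) : iota0 n w i.succ = w i := by
  simp [iota0]

/-- Projection `ℝⁿ⁺¹ → ℝⁿ` dropping the first coordinate. -/
def pi0 (n : ℕ) : (Fin (n + 1) → ℝ) →L[ℝ] (Fin n → ℝ) :=
  ContinuousLinearMap.pi (fun i => ContinuousLinearMap.proj i.succ)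

lemma pi0_apply (n : ℕ) (x : Fin (n + 1) → ℝ) (i : Fin n) : pi0 n x i = x i.succ := rfl

/-- Inclusion `PQ n → PQ (n+1)` with vanishing `(p₁,q₁)`. -/
def iotaM (n : ℕ) : PQ n →L[ℝ] PQ (n + 1) := (iota0 n).prodMap (iota0 n)

/-- Projection `PQ (n+1) → PQ n` dropping `(p₁,q₁)`. -/
def piM (n : ℕ) : PQ (n + 1) →L[ℝ] PQ n := (pi0 n).prodMap (pi0 n)

lemma iotaM_fst_zero (n : ℕ) (w : PQ n) : (iotaM n w).1 0 = 0 := iota0_zero n w.1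
lemma iotaM_snd_zero (n : ℕ) (w : PQ n) : (iotaM n w).2 0 = 0 := iota0_zero n w.2

lemma piM_fst (n : ℕ) (x : PQ (n + 1)) (i : Fin n) : (piM n x).1 i = x.1 i.succ := rfl
lemma piM_snd (n : ℕ) (x : PQ (n + 1)) (i : Fin n) : (piM n x).2 i = x.2 i.succ := rfl

lemma iotaM_fst_succ (n : ℕ) (w : PQ n) (i : Fin n) : (iotaM n w).1 i.succ = w.1 i :=
  iota0_succ n w.1 i
lemma iotaM_snd_succ (n : ℕ) (w : PQ n) (i : Fin n) : (iotaM n w).2 i.succ = w.2 i :=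
  iota0_succ n w.2 i

lemma piM_iotaM (n : ℕ) (w : PQ n) : piM n (iotaM n w) = w := by
  refine Prod.ext ?_ ?_ <;> funext i
  · rw [piM_fst]; exact iota0_succ n w.1 i
  · rw [piM_snd]; exact iota0_succ n w.2 i

lemma omega0_succ (N : ℕ) (x y : PQ (N + 1)) :
    omega0 (N + 1) x y
      = (x.1 0 * y.2 0 - x.2 0 * y.1 0) + omega0 N (piM N x) (piM N y) := by
  rw [omega0, Fin.sum_univ_succ, omega0]
  congr 1

lemma norm_iota0_le (n : ℕ) (w : Fin n → ℝ) : ‖iota0 n w‖ ≤ ‖w‖ := by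
  refine (pi_norm_le_iff_of_nonneg (norm_nonneg w)).mpr (fun j => ?_)
  induction j using Fin.cases with
  | zero => rw [iota0_zero]; simp
  | succ i => rw [iota0_succ]; exact norm_le_pi_norm w i

lemma norm_iotaM_le (n : ℕ) (w : PQ n) : ‖iotaM n w‖ ≤ ‖w‖ := by
  rw [Prod.norm_def, Prod.norm_def]
  exact max_le_max (norm_iota0_le n w.1) (norm_iota0_le n w.2)

lemma norm_update_le (n : ℕ) (g : Fin n → ℝ) (i : Fin n) :
    ‖Function.update g i 0‖ ≤ ‖g‖ := by
  refine (pi_norm_le_iff_of_nonneg (norm_nonneg g)).mpr (fun j => ?_)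
  by_cases h : j = i
  · subst h
    rw [Function.update_self]
    simp
  · rw [Function.update_apply, if_neg h]
    exact norm_le_pi_norm g j

lemma update_add_single (n : ℕ) (g : Fin n → ℝ) (i : Fin n) :
    Function.update g i 0 + g i • (Pi.single i 1 : Fin n → ℝ) = g := by
  funext j
  by_cases h : j = i
  · subst h; simp
  · simp [Function.update_apply, Pi.single_apply, h]

/-- Lemma 2 of the paper: any local symplectomorphism of `ω₀` on
`ℝ^{2(n+1)}` preserving `p₁` and the ideal `⟨q₁⟩` preserves `q₁`, its remaining
components are independent of `(p₁, q₁)`, and they define a local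
symplectomorphism `B` of the restricted symplectic form on `ℝ^{2n}`. -/
theorem isotropy_of_nonsingular_pair (n : ℕ) (Ψ : PQ (n + 1) → PQ (n + 1))
    (hΨ : IsLocalSymp (n + 1) Ψ)
    (hp1 : ∀ᶠ z in 𝓝 (0 : PQ (n + 1)), (Ψ z).1 0 = z.1 0)
    (hq1 : InIdeal (n + 1) 1 (fun z => (Ψ z).2 0)) :
    (∀ᶠ z in 𝓝 (0 : PQ (n + 1)), (Ψ z).2 0 = z.2 0) ∧
      ∃ B : PQ n → PQ n, IsLocalSymp n B ∧
        ∀ᶠ z in 𝓝 (0 : PQ (n + 1)), ∀ i : Fin n,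
          (Ψ z).1 i.succ = (B ((fun j => z.1 j.succ, fun j => z.2 j.succ) : PQ n)).1 i ∧
          (Ψ z).2 i.succ = (B ((fun j => z.1 j.succ, fun j => z.2 j.succ) : PQ n)).2 i := by
  obtain ⟨hΨ0, ⟨U, hU, hUs⟩, _, hsympE⟩ := hΨ
  obtain ⟨cf, hcf, hq1E⟩ := hq1
  have hIntU : ∀ᶠ z in 𝓝 (0 : PQ (n + 1)), z ∈ interior U := interior_mem_nhds.mpr hU
  obtain ⟨r, hr, hball⟩ := Metric.mem_nhds_iff.mp (hIntU.and (hsympE.and (hp1.and hq1E)))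
  set s : Set (PQ (n + 1)) := Metric.ball 0 r with hs
  have hso : IsOpen s := Metric.isOpen_ball
  have hsc : Convex ℝ s := convex_ball 0 r
  have hsmooth : ContDiffOn ℝ (⊤ : ℕ∞) Ψ s := by
    refine hUs.mono (fun z hz => interior_subset (hball hz).1)
  have hdiff : ∀ z ∈ s, DifferentiableAt ℝ Ψ z := fun z hz =>
    ((hsmooth.differentiableOn (by simp)).differentiableAt (hso.mem_nhds hz))
  have hsymp : ∀ z ∈ s, ∀ u v,
      omega0 (n + 1) (fderiv ℝ Ψ z u) (fderiv ℝ Ψ z v) = omega0 (n + 1) u v :=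
    fun z hz => (hball hz).2.1
  have hp1s : ∀ z ∈ s, (Ψ z).1 0 = z.1 0 := fun z hz => (hball hz).2.2.1
  have hq1s : ∀ z ∈ s, (Ψ z).2 0 = cf 0 z * z.2 0 := by
    intro z hz
    have := (hball hz).2.2.2
    simpa [genFun, Nat.zero_div] using this
  -- derivative of first components
  have hA1 : ∀ z ∈ s, ∀ v, (fderiv ℝ Ψ z v).1 0 = v.1 0 := by
    intro z hz v
    set π1 : PQ (n + 1) →L[ℝ] ℝ :=
      (ContinuousLinearMap.proj 0).comp (ContinuousLinearMap.fst ℝ _ _) with hπ1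
    have hF : HasFDerivAt (fun z : PQ (n + 1) => (Ψ z).1 0)
        (π1.comp (fderiv ℝ Ψ z)) z := π1.hasFDerivAt.comp z (hdiff z hz).hasFDerivAt
    have heq : (fun z : PQ (n + 1) => (Ψ z).1 0) =ᶠ[𝓝 z] (fun z : PQ (n + 1) => z.1 0) :=
      Filter.eventuallyEq_of_mem (hso.mem_nhds hz) (fun y hy => hp1s y hy)
    have hG : HasFDerivAt (fun z : PQ (n + 1) => z.1 0) π1 z := π1.hasFDerivAt
    have hF' : HasFDerivAt (fun z : PQ (n + 1) => z.1 0)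
        (π1.comp (fderiv ℝ Ψ z)) z := hF.congr_of_eventuallyEq heq.symm
    have := hF'.unique hG
    have happ := congrArg (fun L : PQ (n + 1) →L[ℝ] ℝ => L v) this
    simpa [hπ1] using happ
  have hAeQ : ∀ z ∈ s, fderiv ℝ Ψ z (eQ n) = eQ n := fun z hz =>
    col_eQ (fderiv ℝ Ψ z) (hsymp z hz) (hA1 z hz)
  -- integrate along the q₁ direction
  have hqdec : ∀ z ∈ s, Ψ z = Ψ (z.1, Function.update z.2 0 0) + z.2 0 • eQ n := by
    intro z hz
    set c : PQ (n + 1) := (z.1, Function.update z.2 0 0) with hc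
    have hcz : c ∈ s := by
      rw [hs, mem_ball_zero_iff] at hz ⊢
      calc ‖c‖ = max ‖z.1‖ ‖Function.update z.2 0 0‖ := by rw [Prod.norm_def]
        _ ≤ max ‖z.1‖ ‖z.2‖ := max_le_max le_rfl (norm_update_le _ z.2 0)
        _ = ‖z‖ := by rw [Prod.norm_def]
        _ < r := hz
    have hsum : c + z.2 0 • eQ n = z := by
      refine Prod.ext ?_ ?_
      · show z.1 + z.2 0 • (0 : Fin (n + 1) → ℝ) = z.1
        simp
      · show Function.update z.2 0 0 + z.2 0 • (Pi.single 0 1 : Fin (n + 1) → ℝ) = z.2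
        exact update_add_single _ z.2 0
    have := line_const hso hsc hdiff hAeQ hcz (by rw [hsum]; exact hz)
    rw [hsum] at this
    exact this
  -- q₁ is preserved
  have hQ1 : ∀ z ∈ s, (Ψ z).2 0 = z.2 0 := by
    intro z hz
    have h1 := hqdec z hz
    have hcz : ((z.1, Function.update z.2 0 0) : PQ (n + 1)) ∈ s := by
      rw [hs, mem_ball_zero_iff] at hz ⊢
      calc ‖((z.1, Function.update z.2 0 0) : PQ (n + 1))‖
          = max ‖z.1‖ ‖Function.update z.2 0 0‖ := by rw [Prod.norm_def]
        _ ≤ max ‖z.1‖ ‖z.2‖ := max_le_max le_rfl (norm_update_le _ z.2 0)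
        _ = ‖z‖ := by rw [Prod.norm_def]
        _ < r := hz
    have h2 := hq1s _ hcz
    have h3 : (Ψ z).2 0 = (Ψ (z.1, Function.update z.2 0 0)).2 0 + z.2 0 * 1 := by
      rw [h1]
      show (Ψ _).2 0 + z.2 0 • (Pi.single 0 1 : Fin (n + 1) → ℝ) 0 = _
      simp
    rw [h3, h2]
    simp
  -- derivative of second components
  have hA2 : ∀ z ∈ s, ∀ v, (fderiv ℝ Ψ z v).2 0 = v.2 0 := by
    intro z hz v
    set π2 : PQ (n + 1) →L[ℝ] ℝ :=
      (ContinuousLinearMap.proj 0).comp (ContinuousLinearMap.snd ℝ _ _) with hπ2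
    have hF : HasFDerivAt (fun z : PQ (n + 1) => (Ψ z).2 0)
        (π2.comp (fderiv ℝ Ψ z)) z := π2.hasFDerivAt.comp z (hdiff z hz).hasFDerivAt
    have heq : (fun z : PQ (n + 1) => (Ψ z).2 0) =ᶠ[𝓝 z] (fun z : PQ (n + 1) => z.2 0) :=
      Filter.eventuallyEq_of_mem (hso.mem_nhds hz) (fun y hy => hQ1 y hy)
    have hG : HasFDerivAt (fun z : PQ (n + 1) => z.2 0) π2 z := π2.hasFDerivAt
    have hF' : HasFDerivAt (fun z : PQ (n + 1) => z.2 0)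
        (π2.comp (fderiv ℝ Ψ z)) z := hF.congr_of_eventuallyEq heq.symm
    have := hF'.unique hG
    have happ := congrArg (fun L : PQ (n + 1) →L[ℝ] ℝ => L v) this
    simpa [hπ2] using happ
  have hAeP : ∀ z ∈ s, fderiv ℝ Ψ z (eP n) = eP n := fun z hz =>
    col_eP (fderiv ℝ Ψ z) (hsymp z hz) (hA2 z hz)
  -- integrate along the p₁ direction
  have hpdec : ∀ z ∈ s, Ψ z = Ψ (Function.update z.1 0 0, z.2) + z.1 0 • eP n := by
    intro z hz
    set c : PQ (n + 1) := (Function.update z.1 0 0, z.2) with hc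
    have hcz : c ∈ s := by
      rw [hs, mem_ball_zero_iff] at hz ⊢
      calc ‖c‖ = max ‖Function.update z.1 0 0‖ ‖z.2‖ := by rw [Prod.norm_def]
        _ ≤ max ‖z.1‖ ‖z.2‖ := max_le_max (norm_update_le _ z.1 0) le_rfl
        _ = ‖z‖ := by rw [Prod.norm_def]
        _ < r := hz
    have hsum : c + z.1 0 • eP n = z := by
      refine Prod.ext ?_ ?_
      · show Function.update z.1 0 0 + z.1 0 • (Pi.single 0 1 : Fin (n + 1) → ℝ) = z.1
        exact update_add_single _ z.1 0
      · show z.2 + z.1 0 • (0 : Fin (n + 1) → ℝ) = z.2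
        simp
    have := line_const hso hsc hdiff hAeP hcz (by rw [hsum]; exact hz)
    rw [hsum] at this
    exact this
  -- total decomposition
  set tl : PQ (n + 1) → PQ n :=
    fun z => ((fun j => z.1 j.succ, fun j => z.2 j.succ) : PQ n) with htl
  have hiota_tl : ∀ z : PQ (n + 1),
      iotaM n (tl z) = (Function.update z.1 0 0, Function.update z.2 0 0) := by
    intro z
    refine Prod.ext ?_ ?_
    · funext j
      induction j using Fin.cases with
      | zero => simp [iotaM_fst_zero]
      | succ i => simp [iotaM_fst_succ, Function.update_apply, Fin.succ_ne_zero, htl]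
    · funext j
      induction j using Fin.cases with
      | zero => simp [iotaM_snd_zero]
      | succ i => simp [iotaM_snd_succ, Function.update_apply, Fin.succ_ne_zero, htl]
  have hnorm_iotatl : ∀ z : PQ (n + 1), ‖iotaM n (tl z)‖ ≤ ‖z‖ := by
    intro z
    rw [hiota_tl z, Prod.norm_def, Prod.norm_def]
    exact max_le_max (norm_update_le _ z.1 0) (norm_update_le _ z.2 0)
  have htot : ∀ z ∈ s, Ψ z = Ψ (iotaM n (tl z)) + z.1 0 • eP n + z.2 0 • eQ n := by
    intro z hz
    have h1 := hqdec z hz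
    have hcz : ((z.1, Function.update z.2 0 0) : PQ (n + 1)) ∈ s := by
      rw [hs, mem_ball_zero_iff] at hz ⊢
      calc ‖((z.1, Function.update z.2 0 0) : PQ (n + 1))‖
          = max ‖z.1‖ ‖Function.update z.2 0 0‖ := by rw [Prod.norm_def]
        _ ≤ max ‖z.1‖ ‖z.2‖ := max_le_max le_rfl (norm_update_le _ z.2 0)
        _ = ‖z‖ := by rw [Prod.norm_def]
        _ < r := hz
    have h2 := hpdec _ hcz
    rw [h1, h2, hiota_tl z]
  -- definition of B
  set B : PQ n → PQ n := fun w => piM n (Ψ (iotaM n w)) with hB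
  -- the small ball in PQ n
  set s' : Set (PQ n) := Metric.ball 0 r with hs'
  have hmap : ∀ w ∈ s', iotaM n w ∈ s := by
    intro w hw
    rw [hs', mem_ball_zero_iff] at hw
    rw [hs, mem_ball_zero_iff]
    exact lt_of_le_of_lt (norm_iotaM_le n w) hw
  have hBdiff : ∀ w ∈ s', HasFDerivAt B
      ((piM n).comp ((fderiv ℝ Ψ (iotaM n w)).comp (iotaM n))) w := by
    intro w hw
    exact (piM n).hasFDerivAt.comp w
      (((hdiff _ (hmap w hw)).hasFDerivAt).comp w (iotaM n).hasFDerivAt)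
  have hBsymp : ∀ w ∈ s', ∀ u v : PQ n,
      omega0 n (fderiv ℝ B w u) (fderiv ℝ B w v) = omega0 n u v := by
    intro w hw u v
    rw [(hBdiff w hw).fderiv]
    set A := fderiv ℝ Ψ (iotaM n w) with hA
    set x := A (iotaM n u) with hx
    set y := A (iotaM n v) with hy
    have hzs := hmap w hw
    have hx1 : x.1 0 = 0 := by rw [hx, hA1 _ hzs, iotaM_fst_zero]
    have hx2 : x.2 0 = 0 := by rw [hx, hA2 _ hzs, iotaM_snd_zero]
    have hy1 : y.1 0 = 0 := by rw [hy, hA1 _ hzs, iotaM_fst_zero]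
    have hy2 : y.2 0 = 0 := by rw [hy, hA2 _ hzs, iotaM_snd_zero]
    have key : omega0 (n + 1) x y = omega0 (n + 1) (iotaM n u) (iotaM n v) :=
      hsymp _ hzs _ _
    have e1 := omega0_succ n x y
    have e2 := omega0_succ n (iotaM n u) (iotaM n v)
    rw [hx1, hx2, hy1, hy2] at e1
    rw [iotaM_fst_zero, iotaM_snd_zero, iotaM_fst_zero, iotaM_snd_zero,
      piM_iotaM, piM_iotaM] at e2
    show omega0 n (piM n x) (piM n y) = omega0 n u v
    have : omega0 n (piM n x) (piM n y) = omega0 (n + 1) x y := by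
      rw [e1]; ring
    rw [this, key, e2]; ring
  have h0s' : (0 : PQ n) ∈ s' := Metric.mem_ball_self hr
  refine ⟨Filter.eventually_of_mem (Metric.ball_mem_nhds 0 hr) hQ1, B, ⟨?_, ?_, ?_, ?_⟩, ?_⟩
  · -- B 0 = 0
    rw [hB]
    show piM n (Ψ (iotaM n 0)) = 0
    rw [map_zero, hΨ0, map_zero]
  · -- SmoothGerm B
    refine ⟨s', Metric.ball_mem_nhds 0 hr, ?_⟩
    have h1 : ContDiffOn ℝ (⊤ : ℕ∞) (fun w => Ψ (iotaM n w)) s' :=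
      hsmooth.comp ((iotaM n).contDiff.contDiffOn) hmap
    exact (piM n).contDiff.comp_contDiffOn h1
  · -- bijectivity of fderiv B 0
    exact symp_bijective (fderiv ℝ B 0) (hBsymp 0 h0s')
  · -- eventual symplectic property for B
    exact Filter.eventually_of_mem (Metric.ball_mem_nhds 0 hr) hBsymp
  · -- final component identities
    refine Filter.eventually_of_mem (Metric.ball_mem_nhds 0 hr) (fun z hz => ?_)
    intro i
    have h1 := htot z hz
    constructor
    · have : (Ψ z).1 i.succ
          = (Ψ (iotaM n (tl z))).1 i.succ + z.1 0 * (Pi.single 0 1 : Fin (n + 1) → ℝ) i.succ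
            + z.2 0 * (0 : Fin (n + 1) → ℝ) i.succ := by
        rw [h1]; rfl
      rw [this, Pi.single_eq_of_ne (Fin.succ_ne_zero i)]
      show _ + _ + _ = (piM n (Ψ (iotaM n (tl z)))).1 i
      rw [piM_fst]
      simp
    · have : (Ψ z).2 i.succ
          = (Ψ (iotaM n (tl z))).2 i.succ + z.1 0 * (0 : Fin (n + 1) → ℝ) i.succ
            + z.2 0 * (Pi.single 0 1 : Fin (n + 1) → ℝ) i.succ := by
        rw [h1]; rfl
      rw [this, Pi.single_eq_of_ne (Fin.succ_ne_zero i)]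
      show _ + _ + _ = (piM n (Ψ (iotaM n (tl z)))).2 i
      rw [piM_snd]
      simp
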